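/- Suppose the Poincaré inequality holds with constant c: for every F ∈ 𝓕, ∫_ℝ (F(x) − m̄(F))² dm(x) ≤ c·∫_ℝ (dF/dS)² dS. Let a ∈ ℝ and let A⁺, A⁻ > 0, F₊, F₋ ∈ 𝓕 satisfy ∫_{(a,∞)} (F₊(x) − F₊(a))² dm(x) ≥ A⁺ ∫_{(a,∞)} (dF₊/dS)² dS > 0 and ∫_{(−∞,a)} (F₋(x) − F₋(a))² dm(x) ≥ A⁻ ∫_{(−∞,a)} (dF₋/dS)² dS > 0. Then min(A⁺, A⁻) ≤ c. Consequently the optimal Poincaré constant c_P satisfies c_P ≥ sup_a min(A⁺ₐ, A⁻ₐ), where A⁺ₐ, A⁻ₐ are the optimal Hardy constants over (a,∞) and (−∞,a). -/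

import Mathlib

open MeasureTheory Set
open scoped ENNReal

private lemma atom_zero (S : ℝ → ℝ) (hScont : Continuous S) (μS : Measure ℝ)
    (hμS : ∀ c d : ℝ, c ≤ d → μS (Ioc c d) = ENNReal.ofReal (S d - S c)) (a : ℝ) :
    μS {a} = 0 := by
  refine le_antisymm ?_ zero_le
  refine ENNReal.le_of_forall_pos_le_add (fun ε hε _ => ?_)
  have hc : ContinuousAt S a := hScont.continuousAt
  obtain ⟨δ, hδ, hδ'⟩ := Metric.continuousAt_iff.mp hc ε (by exact_mod_cast hε)
  have hxa : a - δ/2 ≤ a := by linarith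
  have hdist : dist (a - δ/2) a < δ := by
    rw [Real.dist_eq]; rw [abs_of_nonpos (by linarith)]; linarith
  have hS := hδ' hdist
  rw [Real.dist_eq] at hS
  have hle : S a - S (a - δ/2) ≤ (ε : ℝ) := by
    have := abs_lt.mp hS
    linarith [this.1, this.2]
  calc μS {a} ≤ μS (Ioc (a - δ/2) a) := by
        apply measure_mono; intro x hx; simp at hx; subst hx; constructor <;> linarith
    _ = ENNReal.ofReal (S a - S (a - δ/2)) := hμS _ _ hxa
    _ ≤ ENNReal.ofReal (ε : ℝ) := ENNReal.ofReal_le_ofReal hle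
    _ = (ε : ℝ≥0∞) := ENNReal.ofReal_coe_nnreal
    _ = 0 + ε := (zero_add _).symm

private lemma sq_lint_lt_top {μ : Measure ℝ} {f : ℝ → ℝ} (h : MemLp f 2 μ) :
    ∫⁻ x, ENNReal.ofReal (f x ^ 2) ∂μ < ⊤ :=
  h.integrable_sq.lintegral_lt_top

private lemma ftc_right (μS : Measure ℝ) (F f : ℝ → ℝ) (a : ℝ)
    (hdF : ∀ x y : ℝ, x < y → F y - F x = ∫ t in Ioc x y, f t ∂μS)
    (x y : ℝ) (hxy : x < y) :
    (Ioi a).indicator (fun z => F z - F a) y - (Ioi a).indicator (fun z => F z - F a) x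
      = ∫ t in Ioc x y, (Ioi a).indicator f t ∂μS := by
  rw [setIntegral_indicator measurableSet_Ioi, Ioc_inter_Ioi]
  rcases lt_or_ge (x ⊔ a) y with h | h
  · have h1 := hdF (x ⊔ a) y h
    have hay : a < y := lt_of_le_of_lt le_sup_right h
    rcases lt_or_ge a x with hax | hax
    · rw [sup_eq_left.mpr hax.le] at h1 ⊢
      rw [indicator_of_mem (mem_Ioi.mpr hay), indicator_of_mem (mem_Ioi.mpr hax), ← h1]
      ring
    · rw [sup_eq_right.mpr hax] at h1 ⊢
      rw [indicator_of_mem (mem_Ioi.mpr hay),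
        indicator_of_notMem (by simpa [mem_Ioi, not_lt] using hax), ← h1]
      ring
  · have hya : y ≤ a := (le_sup_iff.mp h).resolve_left (not_le.mpr hxy)
    rw [indicator_of_notMem (by simpa [mem_Ioi, not_lt] using hya),
      indicator_of_notMem (by simp [mem_Ioi, not_lt]; linarith)]
    rw [Ioc_eq_empty (not_lt.mpr h)]
    simp

private lemma ftc_left (μS : Measure ℝ) (F f : ℝ → ℝ) (a : ℝ) (hatom : μS {a} = 0)
    (hdF : ∀ x y : ℝ, x < y → F y - F x = ∫ t in Ioc x y, f t ∂μS)
    (x y : ℝ) (hxy : x < y) :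
    (Iio a).indicator (fun z => F z - F a) y - (Iio a).indicator (fun z => F z - F a) x
      = ∫ t in Ioc x y, (Iio a).indicator f t ∂μS := by
  have hane : ∀ᵐ t ∂μS, t ≠ a := by
    rw [ae_iff]
    simpa using hatom
  have hae : (fun t => (Iio a).indicator f t)
      =ᵐ[μS.restrict (Ioc x y)] (fun t => (Iic a).indicator f t) := by
    filter_upwards [ae_restrict_of_ae hane] with t ht
    rcases lt_or_ge t a with h | h
    · rw [indicator_of_mem (mem_Iio.mpr h), indicator_of_mem (mem_Iic.mpr h.le)]
    · have h' : a < t := lt_of_le_of_ne h (Ne.symm ht)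
      rw [indicator_of_notMem (by simp [mem_Iio, not_lt]; exact h),
        indicator_of_notMem (by simp [mem_Iic, not_le]; exact h')]
  rw [integral_congr_ae hae, setIntegral_indicator measurableSet_Iic, Ioc_inter_Iic]
  rcases lt_or_ge x (y ⊓ a) with h | h
  · have h1 := hdF x (y ⊓ a) h
    have hxa : x < a := lt_of_lt_of_le h inf_le_right
    rcases lt_or_ge y a with hya | hya
    · rw [inf_eq_left.mpr hya.le] at h1 ⊢
      rw [indicator_of_mem (mem_Iio.mpr hya), indicator_of_mem (mem_Iio.mpr hxa), ← h1]
      ring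
    · rw [inf_eq_right.mpr hya] at h1 ⊢
      rw [indicator_of_notMem (by simp [mem_Iio, not_lt]; exact hya),
        indicator_of_mem (mem_Iio.mpr hxa), ← h1]
      ring
  · have hax : a ≤ x := (inf_le_iff.mp h).resolve_left (not_le.mpr hxy)
    rw [indicator_of_notMem (by simp [mem_Iio, not_lt]; linarith),
      indicator_of_notMem (by simp [mem_Iio, not_lt]; exact hax)]
    rw [Ioc_eq_empty (not_lt.mpr h)]
    simp

/-- If the Poincaré inequality holds with constant `c`, and for some `a` there
are `F₊, F₋ ∈ 𝓕` witnessing that the Hardy inequalities over `(a,∞)` and `(−∞,a)` cannot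
hold with constants smaller than `A⁺ > 0` and `A⁻ > 0` respectively (the corresponding
Dirichlet energies being positive), then `min(A⁺, A⁻) ≤ c`.
(Consequently the optimal Poincaré constant satisfies `c_P ≥ sup_a min(A⁺ₐ, A⁻ₐ)`.) -/
theorem poincare_lower_bound
    (S : ℝ → ℝ) (hScont : Continuous S) (hSmono : StrictMono S)
    (hStop : Filter.Tendsto S Filter.atTop Filter.atTop)
    (hSbot : Filter.Tendsto S Filter.atBot Filter.atBot)
    (μS : Measure ℝ)
    (hμS : ∀ c d : ℝ, c ≤ d → μS (Ioc c d) = ENNReal.ofReal (S d - S c))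
    (m : Measure ℝ) [IsFiniteMeasure m] (hm : m univ ≠ 0)
    (c : ℝ)
    (hPoincare : ∀ F f : ℝ → ℝ, MemLp F 2 m → Integrable f μS → MemLp f 2 μS →
      (∀ x y : ℝ, x < y → F y - F x = ∫ t in Ioc x y, f t ∂μS) →
      ∫⁻ x, ENNReal.ofReal ((F x - (m univ).toReal⁻¹ * ∫ y, F y ∂m) ^ 2) ∂m ≤
        ENNReal.ofReal c * ∫⁻ t, ENNReal.ofReal (f t ^ 2) ∂μS)
    (a : ℝ) (Aplus Aminus : ℝ) (hAplus : 0 < Aplus) (hAminus : 0 < Aminus)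
    (Fp fp Fm fm : ℝ → ℝ)
    (hFpL2 : MemLp Fp 2 m) (hfpint : Integrable fp μS) (hfpL2 : MemLp fp 2 μS)
    (hdFp : ∀ x y : ℝ, x < y → Fp y - Fp x = ∫ t in Ioc x y, fp t ∂μS)
    (hFmL2 : MemLp Fm 2 m) (hfmint : Integrable fm μS) (hfmL2 : MemLp fm 2 μS)
    (hdFm : ∀ x y : ℝ, x < y → Fm y - Fm x = ∫ t in Ioc x y, fm t ∂μS)
    (hWitPlus : ENNReal.ofReal Aplus * ∫⁻ t in Ioi a, ENNReal.ofReal (fp t ^ 2) ∂μS ≤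
      ∫⁻ x in Ioi a, ENNReal.ofReal ((Fp x - Fp a) ^ 2) ∂m)
    (hWitPlusPos : 0 < ∫⁻ t in Ioi a, ENNReal.ofReal (fp t ^ 2) ∂μS)
    (hWitMinus : ENNReal.ofReal Aminus * ∫⁻ t in Iio a, ENNReal.ofReal (fm t ^ 2) ∂μS ≤
      ∫⁻ x in Iio a, ENNReal.ofReal ((Fm x - Fm a) ^ 2) ∂m)
    (hWitMinusPos : 0 < ∫⁻ t in Iio a, ENNReal.ofReal (fm t ^ 2) ∂μS) :
    min Aplus Aminus ≤ c := by
  classical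
  have hatom : μS {a} = 0 := atom_zero S hScont μS hμS a
  -- truncated functions
  have hgpL2 : MemLp ((Ioi a).indicator (fun z => Fp z - Fp a)) 2 m :=
    (hFpL2.sub (memLp_const (Fp a))).indicator measurableSet_Ioi
  have hgmL2 : MemLp ((Iio a).indicator (fun z => Fm z - Fm a)) 2 m :=
    (hFmL2.sub (memLp_const (Fm a))).indicator measurableSet_Iio
  obtain ⟨α, β, hne, hmean⟩ :
      ∃ α β : ℝ, (α ≠ 0 ∨ β ≠ 0) ∧
        α * (∫ x, (Ioi a).indicator (fun z => Fp z - Fp a) x ∂m)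
          + β * (∫ x, (Iio a).indicator (fun z => Fm z - Fm a) x ∂m) = 0 := by
    by_cases h : (∫ x, (Ioi a).indicator (fun z => Fp z - Fp a) x ∂m) = 0 ∧
        (∫ x, (Iio a).indicator (fun z => Fm z - Fm a) x ∂m) = 0
    · exact ⟨1, 1, Or.inl one_ne_zero, by rw [h.1, h.2]; ring⟩
    · refine ⟨∫ x, (Iio a).indicator (fun z => Fm z - Fm a) x ∂m,
        -(∫ x, (Ioi a).indicator (fun z => Fp z - Fp a) x ∂m), ?_, by ring⟩
      by_contra hc
      push_neg at hc
      exact h ⟨by simpa using hc.2, hc.1⟩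
  -- the test function and its derivative
  set G : ℝ → ℝ := fun z => α * (Ioi a).indicator (fun w => Fp w - Fp a) z
      + β * (Iio a).indicator (fun w => Fm w - Fm a) z with hG_def
  set f : ℝ → ℝ := fun t => α * (Ioi a).indicator fp t + β * (Iio a).indicator fm t
    with hf_def
  have hGL2 : MemLp G 2 m := (hgpL2.const_mul α).add (hgmL2.const_mul β)
  have hfint : Integrable f μS :=
    ((hfpint.indicator measurableSet_Ioi).const_mul α).add
      ((hfmint.indicator measurableSet_Iio).const_mul β)
  have hfL2 : MemLp f 2 μS :=
    ((hfpL2.indicator measurableSet_Ioi).const_mul α).add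
      ((hfmL2.indicator measurableSet_Iio).const_mul β)
  have hftc : ∀ x y : ℝ, x < y → G y - G x = ∫ t in Ioc x y, f t ∂μS := by
    intro x y hxy
    have h1 := ftc_right μS Fp fp a hdFp x y hxy
    have h2 := ftc_left μS Fm fm a hatom hdFm x y hxy
    rw [hf_def, hG_def]
    simp only
    rw [integral_add (((hfpint.indicator measurableSet_Ioi).const_mul α).integrableOn)
        (((hfmint.indicator measurableSet_Iio).const_mul β).integrableOn),
      integral_const_mul, integral_const_mul, ← h1, ← h2]
    ring
  -- G has mean zero
  have hgpInt : Integrable ((Ioi a).indicator (fun z => Fp z - Fp a)) m :=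
    hgpL2.integrable (by norm_num)
  have hgmInt : Integrable ((Iio a).indicator (fun z => Fm z - Fm a)) m :=
    hgmL2.integrable (by norm_num)
  have hGmean : ∫ x, G x ∂m = 0 := by
    rw [hG_def]
    simp only
    rw [integral_add (hgpInt.const_mul α) (hgmInt.const_mul β),
      integral_const_mul, integral_const_mul]
    exact hmean
  have hP := hPoincare G f hGL2 hfint hfL2 hftc
  simp only [hGmean, mul_zero, sub_zero] at hP
  -- energies
  set Ep := ∫⁻ t in Ioi a, ENNReal.ofReal (fp t ^ 2) ∂μS with hEp
  set Em := ∫⁻ t in Iio a, ENNReal.ofReal (fm t ^ 2) ∂μS with hEm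
  have hEpTop : Ep ≠ ⊤ := by
    have hle : Ep ≤ ∫⁻ t, ENNReal.ofReal (fp t ^ 2) ∂μS := by
      rw [← setLIntegral_univ]; exact lintegral_mono_set (subset_univ _)
    exact ne_top_of_le_ne_top (sq_lint_lt_top hfpL2).ne hle
  have hEmTop : Em ≠ ⊤ := by
    have hle : Em ≤ ∫⁻ t, ENNReal.ofReal (fm t ^ 2) ∂μS := by
      rw [← setLIntegral_univ]; exact lintegral_mono_set (subset_univ _)
    exact ne_top_of_le_ne_top (sq_lint_lt_top hfmL2).ne hle
  -- Dirichlet energy of f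
  have hf_Ioi : ∫⁻ t in Ioi a, ENNReal.ofReal (f t ^ 2) ∂μS
      = ENNReal.ofReal (α ^ 2) * Ep := by
    rw [hEp, ← lintegral_const_mul' (ENNReal.ofReal (α ^ 2)) _ ENNReal.ofReal_ne_top]
    refine setLIntegral_congr_fun measurableSet_Ioi (fun t ht => ?_)
    rw [hf_def]
    simp only
    rw [indicator_of_mem ht, indicator_of_notMem (by simp [mem_Iio, not_lt]; exact ht.le),
      mul_zero, add_zero, ← ENNReal.ofReal_mul (sq_nonneg α)]
    ring_nf
  have hf_Iio : ∫⁻ t in Iio a, ENNReal.ofReal (f t ^ 2) ∂μS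
      = ENNReal.ofReal (β ^ 2) * Em := by
    rw [hEm, ← lintegral_const_mul' (ENNReal.ofReal (β ^ 2)) _ ENNReal.ofReal_ne_top]
    refine setLIntegral_congr_fun measurableSet_Iio (fun t ht => ?_)
    rw [hf_def]
    simp only
    rw [indicator_of_mem ht, indicator_of_notMem (by simp [mem_Ioi, not_lt]; exact ht.le),
      mul_zero, zero_add, ← ENNReal.ofReal_mul (sq_nonneg β)]
    ring_nf
  have hdisj : Disjoint (Iio a) (Ioi a) :=
    Set.disjoint_left.mpr fun x hx hx' => lt_asymm (mem_Iio.mp hx) (mem_Ioi.mp hx')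
  have hf_tot : ∫⁻ t, ENNReal.ofReal (f t ^ 2) ∂μS
      = ENNReal.ofReal (α ^ 2) * Ep + ENNReal.ofReal (β ^ 2) * Em := by
    have h0 : ∫⁻ t in {a}, ENNReal.ofReal (f t ^ 2) ∂μS = 0 :=
      setLIntegral_measure_zero _ _ hatom
    have hun : (Iio a : Set ℝ) ∪ Ici a = univ := Iio_union_Ici
    rw [← setLIntegral_univ, ← hun,
      lintegral_union measurableSet_Ici (Iio_disjoint_Ici le_rfl),
      ← Ioi_union_left,
      lintegral_union (measurableSet_singleton a)
        (Set.disjoint_left.mpr fun x hx hx' => by simp at hx'; exact absurd hx' (ne_of_gt hx)),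
      h0, add_zero, hf_Ioi, hf_Iio, add_comm]
  -- lower bound for the variance
  have hG_Ioi : ∫⁻ x in Ioi a, ENNReal.ofReal (G x ^ 2) ∂m
      = ENNReal.ofReal (α ^ 2) * ∫⁻ x in Ioi a, ENNReal.ofReal ((Fp x - Fp a) ^ 2) ∂m := by
    rw [← lintegral_const_mul' (ENNReal.ofReal (α ^ 2)) _ ENNReal.ofReal_ne_top]
    refine setLIntegral_congr_fun measurableSet_Ioi (fun t ht => ?_)
    rw [hG_def]
    simp only
    rw [indicator_of_mem ht, indicator_of_notMem (by simp [mem_Iio, not_lt]; exact ht.le),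
      mul_zero, add_zero, ← ENNReal.ofReal_mul (sq_nonneg α)]
    ring_nf
  have hG_Iio : ∫⁻ x in Iio a, ENNReal.ofReal (G x ^ 2) ∂m
      = ENNReal.ofReal (β ^ 2) * ∫⁻ x in Iio a, ENNReal.ofReal ((Fm x - Fm a) ^ 2) ∂m := by
    rw [← lintegral_const_mul' (ENNReal.ofReal (β ^ 2)) _ ENNReal.ofReal_ne_top]
    refine setLIntegral_congr_fun measurableSet_Iio (fun t ht => ?_)
    rw [hG_def]
    simp only
    rw [indicator_of_mem ht, indicator_of_notMem (by simp [mem_Ioi, not_lt]; exact ht.le),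
      mul_zero, zero_add, ← ENNReal.ofReal_mul (sq_nonneg β)]
    ring_nf
  have hGlow : ENNReal.ofReal (α ^ 2) * (ENNReal.ofReal Aplus * Ep)
      + ENNReal.ofReal (β ^ 2) * (ENNReal.ofReal Aminus * Em)
      ≤ ∫⁻ x, ENNReal.ofReal (G x ^ 2) ∂m := by
    calc ENNReal.ofReal (α ^ 2) * (ENNReal.ofReal Aplus * Ep)
        + ENNReal.ofReal (β ^ 2) * (ENNReal.ofReal Aminus * Em)
        ≤ (∫⁻ x in Ioi a, ENNReal.ofReal (G x ^ 2) ∂m)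
          + ∫⁻ x in Iio a, ENNReal.ofReal (G x ^ 2) ∂m := by
          rw [hG_Ioi, hG_Iio]
          exact add_le_add (mul_le_mul_right hWitPlus _) (mul_le_mul_right hWitMinus _)
      _ = ∫⁻ x in Ioi a ∪ Iio a, ENNReal.ofReal (G x ^ 2) ∂m :=
          (lintegral_union measurableSet_Iio hdisj.symm).symm
      _ ≤ ∫⁻ x, ENNReal.ofReal (G x ^ 2) ∂m :=
          (lintegral_mono_set (subset_univ _)).trans_eq (setLIntegral_univ _)
  -- put everything together
  set D := ENNReal.ofReal (α ^ 2) * Ep + ENNReal.ofReal (β ^ 2) * Em with hD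
  have hDne : D ≠ 0 := by
    rw [hD]
    rcases hne with hα | hβ
    · refine fun h => ?_
      rw [add_eq_zero] at h
      have : ENNReal.ofReal (α ^ 2) ≠ 0 := by
        rw [Ne, ENNReal.ofReal_eq_zero, not_le]; positivity
      exact (mul_ne_zero this hWitPlusPos.ne') h.1
    · refine fun h => ?_
      rw [add_eq_zero] at h
      have : ENNReal.ofReal (β ^ 2) ≠ 0 := by
        rw [Ne, ENNReal.ofReal_eq_zero, not_le]; positivity
      exact (mul_ne_zero this hWitMinusPos.ne') h.2
  have hDtop : D ≠ ⊤ := by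
    rw [hD]
    exact ENNReal.add_ne_top.mpr ⟨ENNReal.mul_ne_top ENNReal.ofReal_ne_top hEpTop,
      ENNReal.mul_ne_top ENNReal.ofReal_ne_top hEmTop⟩
  have hchain : ENNReal.ofReal (min Aplus Aminus) * D ≤ ENNReal.ofReal c * D := by
    calc ENNReal.ofReal (min Aplus Aminus) * D
        = ENNReal.ofReal (α ^ 2) * (ENNReal.ofReal (min Aplus Aminus) * Ep)
          + ENNReal.ofReal (β ^ 2) * (ENNReal.ofReal (min Aplus Aminus) * Em) := by
          rw [hD]; ring
      _ ≤ ENNReal.ofReal (α ^ 2) * (ENNReal.ofReal Aplus * Ep)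
          + ENNReal.ofReal (β ^ 2) * (ENNReal.ofReal Aminus * Em) := by
          gcongr
          · exact min_le_left _ _
          · exact min_le_right _ _
      _ ≤ ∫⁻ x, ENNReal.ofReal (G x ^ 2) ∂m := hGlow
      _ ≤ ENNReal.ofReal c * ∫⁻ t, ENNReal.ofReal (f t ^ 2) ∂μS := hP
      _ = ENNReal.ofReal c * D := by rw [hf_tot, hD]
  have hfin : ENNReal.ofReal (min Aplus Aminus) ≤ ENNReal.ofReal c :=
    (ENNReal.mul_le_mul_iff_left hDne hDtop).mp hchain
  by_cases hc0 : 0 ≤ c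
  · exact (ENNReal.ofReal_le_ofReal_iff hc0).mp hfin
  · exfalso
    push_neg at hc0
    rw [ENNReal.ofReal_eq_zero.mpr hc0.le, nonpos_iff_eq_zero, ENNReal.ofReal_eq_zero] at hfin
    have : 0 < min Aplus Aminus := lt_min hAplus hAminus
    linarith
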